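/- Let G be a finite group and let k and K be fields of the same characteristic. Then β_k(G) = β_K(G); that is, for fields the invariant β_k(G) depends only on the characteristic of k. -/

import Mathlib

/-- `beta`: see above. -/
noncomputable def beta {A : Type*} [CommRing A] (𝒜 : ℕ → Set A) (B : Subring A) : ℕ∞ :=
  sInf ((↑) '' {n : ℕ | B ≤ Subring.closure {a : A | a ∈ B ∧ ∃ d ≤ n, a ∈ 𝒜 d}})

/-- An `ℕ`-graded commutative `k`-algebra equipped with an action of `G` by
degree-preserving `k`-algebra automorphisms. -/
structure GradedAlgebraWithAction (k : Type) [CommRing k] (G : Type) [Group G] :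
    Type 1 where
  carrier : Type
  [commRing : CommRing carrier]
  [algebra : Algebra k carrier]
  grading : ℕ → Submodule k carrier
  graded : GradedAlgebra grading
  action : G →* (carrier ≃ₐ[k] carrier)
  degPres : ∀ (g : G) (d : ℕ), ∀ a ∈ grading d, action g a ∈ grading d

attribute [instance] GradedAlgebraWithAction.commRing GradedAlgebraWithAction.algebra

namespace GradedAlgebraWithAction

variable {k G : Type} [CommRing k] [Group G] (X : GradedAlgebraWithAction k G)

/-- The invariant subring `A^G`. -/
def inv : Subring X.carrier where
  carrier := {a : X.carrier | ∀ g : G, X.action g a = a}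
  mul_mem' := by intro a b ha hb g; rw [map_mul, ha g, hb g]
  one_mem' := fun g => map_one (X.action g)
  add_mem' := by intro a b ha hb g; rw [map_add, ha g, hb g]
  zero_mem' := fun g => map_zero (X.action g)
  neg_mem' := by intro a ha g; rw [map_neg, ha g]

/-- The invariant subring fixed by a subgroup `H ≤ G`. -/
def invSub (H : Subgroup G) : Subring X.carrier where
  carrier := {a : X.carrier | ∀ g ∈ H, X.action g a = a}
  mul_mem' := by intro a b ha hb g hg; rw [map_mul, ha g hg, hb g hg]
  one_mem' := fun g _ => map_one (X.action g)
  add_mem' := by intro a b ha hb g hg; rw [map_add, ha g hg, hb g hg]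
  zero_mem' := fun g _ => map_zero (X.action g)
  neg_mem' := by intro a ha g hg; rw [map_neg, ha g hg]

/-- `β(A)` of the underlying graded algebra. -/
noncomputable def betaTop : ℕ∞ := beta (fun d => (X.grading d : Set X.carrier)) ⊤

/-- `β(A^G)` for the induced grading on the invariant ring. -/
noncomputable def betaInv : ℕ∞ := beta (fun d => (X.grading d : Set X.carrier)) X.inv

end GradedAlgebraWithAction

/-- `β_k(G)`: the supremum of `β(A^G)` over all `ℕ`-graded commutative `k`-algebras `A`
with an action of `G` by degree-preserving `k`-algebra automorphisms and `β(A) ≤ 1`. -/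
noncomputable def betaRing (k : Type) [CommRing k] (G : Type) [Group G] : ℕ∞ :=
  ⨆ (X : GradedAlgebraWithAction k G) (_ : X.betaTop ≤ 1), X.betaInv

section BetaLemmas

variable {A : Type*} [CommRing A]

lemma betaSet_mono {𝒜 : ℕ → Set A} {B : Subring A} {m n : ℕ} (hmn : m ≤ n)
    (h : B ≤ Subring.closure {a | a ∈ B ∧ ∃ d ≤ m, a ∈ 𝒜 d}) :
    B ≤ Subring.closure {a | a ∈ B ∧ ∃ d ≤ n, a ∈ 𝒜 d} :=
  h.trans (Subring.closure_mono fun a ⟨ha, d, hd, hm⟩ => ⟨ha, d, hd.trans hmn, hm⟩)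

lemma beta_le_iff {𝒜 : ℕ → Set A} {B : Subring A} {n : ℕ} :
    beta 𝒜 B ≤ (n : ℕ∞) ↔ B ≤ Subring.closure {a | a ∈ B ∧ ∃ d ≤ n, a ∈ 𝒜 d} := by
  constructor
  · intro h
    by_contra hc
    have : ((n : ℕ∞) + 1) ≤ beta 𝒜 B := by
      apply le_sInf
      rintro x ⟨m, hm, rfl⟩
      have hnm : n < m := by
        by_contra hnm
        exact hc (betaSet_mono (not_lt.1 hnm) hm)
      exact_mod_cast Nat.succ_le_of_lt hnm
    have h2 := this.trans h
    rw [← Nat.cast_one, ← Nat.cast_add, Nat.cast_le] at h2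
    omega
  · intro h
    exact sInf_le ⟨n, h, rfl⟩

lemma beta_le_of_subset {A' : Type*} [CommRing A'] {𝒜 : ℕ → Set A} {B : Subring A}
    {𝒜' : ℕ → Set A'} {B' : Subring A'}
    (h : ∀ n : ℕ, B' ≤ Subring.closure {a | a ∈ B' ∧ ∃ d ≤ n, a ∈ 𝒜' d} →
         B ≤ Subring.closure {a | a ∈ B ∧ ∃ d ≤ n, a ∈ 𝒜 d}) :
    beta 𝒜 B ≤ beta 𝒜' B' :=
  sInf_le_sInf (Set.image_mono h)

end BetaLemmas

/-- Transfer membership in an `iSup` of submodules along a pointwise inclusion into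
submodules over a possibly different ring. -/
lemma mem_iSup_transfer {M : Type*} [AddCommMonoid M] {R₁ R₂ : Type*}
    [Semiring R₁] [Semiring R₂] [Module R₁ M] [Module R₂ M] {ι : Sort*}
    (P : ι → Submodule R₁ M) (Q : ι → Submodule R₂ M) (h : ∀ i, ∀ x ∈ P i, x ∈ Q i)
    {x : M} (hx : x ∈ ⨆ i, P i) : x ∈ ⨆ i, Q i := by
  refine Submodule.iSup_induction (motive := fun y => y ∈ ⨆ i, Q i) P hx
    (fun i y hy => Submodule.mem_iSup_of_mem i (h i y hy)) (zero_mem _)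
    (fun a b ha hb => add_mem ha hb)
section Restrict

variable {F k G : Type} [CommRing F] [CommRing k] [Group G]

/-- Restriction of scalars along a ring hom `φ : F →+* k`. -/
noncomputable def GradedAlgebraWithAction.restrict (φ : F →+* k)
    (X : GradedAlgebraWithAction k G) : GradedAlgebraWithAction F G :=
  letI alg : Algebra F X.carrier := ((algebraMap k X.carrier).comp φ).toAlgebra
  letI ℬ : ℕ → Submodule F X.carrier := fun d =>
    { carrier := (X.grading d : Set X.carrier)
      add_mem' := fun ha hb => (X.grading d).add_mem ha hb
      zero_mem' := (X.grading d).zero_mem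
      smul_mem' := fun c a ha => by
        have hsm : c • a = φ c • a := by
          rw [Algebra.smul_def, Algebra.smul_def]; rfl
        show c • a ∈ (X.grading d : Set X.carrier)
        rw [hsm]
        exact (X.grading d).smul_mem (φ c) ha }
  haveI := X.graded
  haveI hGM : SetLike.GradedMonoid ℬ :=
    { one_mem := SetLike.one_mem_graded X.grading
      mul_mem := fun {i j a b} ha hb =>
        show a * b ∈ X.grading (i + j) from
          SetLike.mul_mem_graded (ha : a ∈ X.grading i) (hb : b ∈ X.grading j) }
  haveI hInt : DirectSum.IsInternal ℬ := by
    rw [DirectSum.isInternal_submodule_iff_iSupIndep_and_iSup_eq_top]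
    constructor
    · intro d
      rw [Submodule.disjoint_def]
      intro x hx hx'
      have hxA : x ∈ X.grading d := hx
      have hx'A : x ∈ ⨆ j, ⨆ (_ : j ≠ d), X.grading j := by
        rw [iSup_subtype'] at hx' ⊢
        exact mem_iSup_transfer (fun j : {j // j ≠ d} => ℬ j) (fun j : {j // j ≠ d} => X.grading j) (fun i y hy => hy) hx'
      have hind := (DirectSum.Decomposition.isInternal X.grading).submodule_iSupIndep d
      exact (Submodule.disjoint_def.1 hind) x hxA hx'A
    · rw [eq_top_iff]
      intro x _
      classical
      have := DirectSum.sum_support_decompose X.grading x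
      rw [← this]
      refine Submodule.sum_mem _ fun i _ => ?_
      exact Submodule.mem_iSup_of_mem i
        (by exact (DirectSum.decompose X.grading x i).2)
  { carrier := X.carrier
    commRing := inferInstance
    algebra := alg
    grading := ℬ
    graded := { hGM, hInt.chooseDecomposition with }
    action :=
      { toFun := fun g => AlgEquiv.ofRingEquiv (f := (X.action g).toRingEquiv)
          (fun c => (X.action g).commutes (φ c))
        map_one' := by
          ext a
          show X.action 1 a = a
          rw [map_one X.action]; rfl
        map_mul' := fun g h => by
          ext a
          show X.action (g * h) a = X.action g (X.action h a)
          rw [map_mul X.action]; rfl }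
    degPres := fun g d a ha => X.degPres g d a ha }

lemma GradedAlgebraWithAction.restrict_betaTop (φ : F →+* k)
    (X : GradedAlgebraWithAction k G) : (X.restrict φ).betaTop = X.betaTop := rfl

lemma GradedAlgebraWithAction.restrict_betaInv (φ : F →+* k)
    (X : GradedAlgebraWithAction k G) : (X.restrict φ).betaInv = X.betaInv := rfl

lemma betaRing_le_of_ringHom (φ : F →+* k) : betaRing k G ≤ betaRing F G := by
  refine iSup₂_le fun X hX => ?_
  have h1 : (X.restrict φ).betaTop ≤ 1 := by rw [X.restrict_betaTop φ]; exact hX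
  have := le_iSup₂ (f := fun (Y : GradedAlgebraWithAction F G) (_ : Y.betaTop ≤ 1) => Y.betaInv)
    (X.restrict φ) h1
  rwa [X.restrict_betaInv φ] at this

end Restrict
section BaseChange

open TensorProduct

variable {F k G : Type} [Field F] [Field k] [Algebra F k] [Group G]
variable (Y : GradedAlgebraWithAction F G)

/-- Coordinates of `k ⊗[F] A` with respect to a basis of `k` over `F`. -/
noncomputable def bcPhi : (k ⊗[F] Y.carrier) ≃ₗ[F] (Module.Basis.ofVectorSpaceIndex F k →₀ Y.carrier) :=
  letI : DecidableEq ↑(Module.Basis.ofVectorSpaceIndex F k) := Classical.decEq _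
  (TensorProduct.congr (Module.Basis.ofVectorSpace F k).repr (LinearEquiv.refl F Y.carrier)).trans
    (TensorProduct.finsuppScalarLeft F Y.carrier (Module.Basis.ofVectorSpaceIndex F k))

lemma bcPhi_tmul (c : k) (m : Y.carrier) (i : Module.Basis.ofVectorSpaceIndex F k) :
    bcPhi Y (c ⊗ₜ[F] m) i = (Module.Basis.ofVectorSpace F k).repr c i • m := by
  simp [bcPhi]

lemma bcPhi_coord_mem (p : Submodule F Y.carrier) {x : k ⊗[F] Y.carrier}
    (hx : x ∈ p.baseChange k) (c : k) (i : Module.Basis.ofVectorSpaceIndex F k) :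
    bcPhi Y (c • x) i ∈ p := by
  have hx' : x ∈ Submodule.span k (p.map (TensorProduct.mk F k Y.carrier 1) : Set _) := by
    rw [← Submodule.baseChange_eq_span]; exact hx
  refine Submodule.span_induction
    (p := fun y _ => ∀ (c : k) (i : Module.Basis.ofVectorSpaceIndex F k), bcPhi Y (c • y) i ∈ p)
    ?_ ?_ ?_ ?_ hx' c i
  · rintro _ ⟨m, hm, rfl⟩ c i
    have : c • ((TensorProduct.mk F k Y.carrier 1) m) = c ⊗ₜ[F] m := by
      show c • ((1:k) ⊗ₜ[F] m) = c ⊗ₜ[F] m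
      rw [smul_tmul', smul_eq_mul, mul_one]
    rw [this, bcPhi_tmul]
    exact p.smul_mem _ hm
  · intro c i; rw [smul_zero, map_zero]; exact p.zero_mem
  · intro x y _ _ hx hy c i
    rw [smul_add, map_add]
    exact p.add_mem (hx c i) (hy c i)
  · intro a x _ hx c i
    rw [smul_smul]
    exact hx (c * a) i

lemma mem_of_tmul_one_mem (p : Submodule F Y.carrier) {b : Y.carrier}
    (hb : (1:k) ⊗ₜ[F] b ∈ p.baseChange k) : b ∈ p := by
  have h := bcPhi_coord_mem Y p hb 1
  obtain ⟨i, hi⟩ : ∃ i, (Module.Basis.ofVectorSpace F k).repr 1 i ≠ 0 := by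
    by_contra hno
    push_neg at hno
    have : (Module.Basis.ofVectorSpace F k).repr (1:k) = 0 := Finsupp.ext fun i => hno i
    exact one_ne_zero ((Module.Basis.ofVectorSpace F k).repr.map_eq_zero_iff.1 this)
  have h2 := h i
  rw [one_smul, bcPhi_tmul] at h2
  have h3 := p.smul_mem ((Module.Basis.ofVectorSpace F k).repr 1 i)⁻¹ h2
  rwa [smul_smul, inv_mul_cancel₀ hi, one_smul] at h3

lemma bcPhi_coord_mem_iSup {ι' : Sort*} (P : ι' → Submodule F Y.carrier)
    {x : k ⊗[F] Y.carrier} (hx : x ∈ ⨆ j, (P j).baseChange k) (c : k)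
    (i : Module.Basis.ofVectorSpaceIndex F k) : bcPhi Y (c • x) i ∈ ⨆ j, P j := by
  refine Submodule.iSup_induction
    (motive := fun y => ∀ (c : k) (i : Module.Basis.ofVectorSpaceIndex F k), bcPhi Y (c • y) i ∈ ⨆ j, P j)
    _ hx ?_ ?_ ?_ c i
  · intro j y hy c i
    exact Submodule.mem_iSup_of_mem j (bcPhi_coord_mem Y (P j) hy c i)
  · intro c i; rw [smul_zero, map_zero]; exact zero_mem _
  · intro a b ha hb c i
    rw [smul_add, map_add]
    exact add_mem (ha c i) (hb c i)

lemma bc_isInternal :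
    DirectSum.IsInternal (fun d : ℕ => (Y.grading d).baseChange k) := by
  haveI := Y.graded
  rw [DirectSum.isInternal_submodule_iff_iSupIndep_and_iSup_eq_top]
  constructor
  · intro d
    rw [Submodule.disjoint_def]
    intro x hx hx'
    have h1 : ∀ i, bcPhi Y x i ∈ Y.grading d := fun i => by
      simpa using bcPhi_coord_mem Y (Y.grading d) hx 1 i
    have h2 : ∀ i, bcPhi Y x i ∈ ⨆ j, ⨆ (_ : j ≠ d), Y.grading j := fun i => by
      rw [iSup_subtype']
      rw [iSup_subtype'] at hx'
      simpa using bcPhi_coord_mem_iSup Y (fun j : {j // j ≠ d} => Y.grading j) hx' 1 i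
    have hind := (DirectSum.Decomposition.isInternal Y.grading).submodule_iSupIndep d
    have hzero : bcPhi Y x = 0 := by
      ext i
      exact (Submodule.disjoint_def.1 hind) _ (h1 i) (h2 i)
    have := (bcPhi Y).map_eq_zero_iff.1 hzero
    exact this
  · rw [eq_top_iff]
    rintro x -
    induction x using TensorProduct.induction_on with
    | zero => exact zero_mem _
    | tmul c m =>
      classical
      have hm := DirectSum.sum_support_decompose Y.grading m
      rw [← hm, TensorProduct.tmul_sum]
      refine Submodule.sum_mem _ fun j _ => ?_
      exact Submodule.mem_iSup_of_mem j
        (Submodule.tmul_mem_baseChange_of_mem c (DirectSum.decompose Y.grading m j).2)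
    | add a b ha hb => exact add_mem ha hb

lemma baseChange_mul (p q r : Submodule F Y.carrier)
    (h : ∀ a ∈ p, ∀ b ∈ q, a * b ∈ r) {x y : k ⊗[F] Y.carrier}
    (hx : x ∈ p.baseChange k) (hy : y ∈ q.baseChange k) : x * y ∈ r.baseChange k := by
  have hx' : x ∈ Submodule.span k (p.map (TensorProduct.mk F k Y.carrier 1) : Set _) := by
    rw [← Submodule.baseChange_eq_span]; exact hx
  refine Submodule.span_induction (p := fun x _ => x * y ∈ r.baseChange k) ?_ ?_ ?_ ?_ hx'
  · rintro _ ⟨m, hm, rfl⟩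
    have hy' : y ∈ Submodule.span k (q.map (TensorProduct.mk F k Y.carrier 1) : Set _) := by
      rw [← Submodule.baseChange_eq_span]; exact hy
    refine Submodule.span_induction
      (p := fun y _ => (TensorProduct.mk F k Y.carrier 1) m * y ∈ r.baseChange k) ?_ ?_ ?_ ?_ hy'
    · rintro _ ⟨m', hm', rfl⟩
      show ((1:k) ⊗ₜ[F] m) * ((1:k) ⊗ₜ[F] m') ∈ r.baseChange k
      rw [Algebra.TensorProduct.tmul_mul_tmul, mul_one]
      exact Submodule.tmul_mem_baseChange_of_mem 1 (h m hm m' hm')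
    · simp only [mul_zero]; exact zero_mem _
    · intro a b _ _ ha hb; simp only [mul_add]; exact add_mem ha hb
    · intro a z _ hz; simp only [mul_smul_comm]; exact Submodule.smul_mem _ a hz
  · simp only [zero_mul]; exact zero_mem _
  · intro a b _ _ ha hb; simp only [add_mul]; exact add_mem ha hb
  · intro a z _ hz; simp only [smul_mul_assoc]; exact Submodule.smul_mem _ a hz

lemma bc_one_mem : (1 : k ⊗[F] Y.carrier) ∈ (Y.grading 0).baseChange k := by
  haveI := Y.graded
  rw [Algebra.TensorProduct.one_def]
  exact Submodule.tmul_mem_baseChange_of_mem 1 (SetLike.one_mem_graded Y.grading)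

/-- The `G`-action on the base change. -/
noncomputable def bcActionHom : G →* ((k ⊗[F] Y.carrier) ≃ₐ[k] (k ⊗[F] Y.carrier)) where
  toFun g := Algebra.TensorProduct.congr (AlgEquiv.refl (R := k) (A₁ := k)) (Y.action g)
  map_one' := by
    apply AlgEquiv.ext
    intro x
    show Algebra.TensorProduct.congr (AlgEquiv.refl (R := k) (A₁ := k)) (Y.action 1) x = x
    rw [map_one Y.action]
    induction x using TensorProduct.induction_on with
    | zero => simp
    | tmul c m =>
      simp [Algebra.TensorProduct.congr_apply]
    | add a b ha hb => rw [map_add, ha, hb]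
  map_mul' g h := by
    apply AlgEquiv.ext
    intro x
    show Algebra.TensorProduct.congr (AlgEquiv.refl (R := k) (A₁ := k)) (Y.action (g * h)) x =
      (Algebra.TensorProduct.congr (AlgEquiv.refl (R := k) (A₁ := k)) (Y.action g) *
       Algebra.TensorProduct.congr (AlgEquiv.refl (R := k) (A₁ := k)) (Y.action h)) x
    rw [AlgEquiv.mul_apply, map_mul Y.action]
    induction x using TensorProduct.induction_on with
    | zero => simp
    | tmul c m =>
      simp [Algebra.TensorProduct.congr_apply]
    | add a b ha hb => rw [map_add, ha, hb, map_add, map_add]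

lemma bc_degPres (g : G) (d : ℕ) {x : k ⊗[F] Y.carrier}
    (hx : x ∈ (Y.grading d).baseChange k) :
    bcActionHom Y g x ∈ (Y.grading d).baseChange k := by
  have hx' : x ∈ Submodule.span k ((Y.grading d).map (TensorProduct.mk F k Y.carrier 1) : Set _) := by
    rw [← Submodule.baseChange_eq_span]; exact hx
  refine Submodule.span_induction
    (p := fun x _ => bcActionHom Y g x ∈ (Y.grading d).baseChange k) ?_ ?_ ?_ ?_ hx'
  · rintro _ ⟨m, hm, rfl⟩
    show Algebra.TensorProduct.congr (AlgEquiv.refl (R := k) (A₁ := k)) (Y.action g)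
      ((1:k) ⊗ₜ[F] m) ∈ _
    rw [Algebra.TensorProduct.congr_apply, Algebra.TensorProduct.map_tmul]
    exact Submodule.tmul_mem_baseChange_of_mem _ (Y.degPres g d m hm)
  · simp only [map_zero]; exact zero_mem _
  · intro a b _ _ ha hb; simp only [map_add]; exact add_mem ha hb
  · intro a z _ hz
    simp only [map_smul]
    exact Submodule.smul_mem _ a hz

/-- The base change of a graded algebra with `G`-action. -/
noncomputable def GradedAlgebraWithAction.baseChangeGAWA : GradedAlgebraWithAction k G where
  carrier := k ⊗[F] Y.carrier
  grading := fun d => (Y.grading d).baseChange k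
  graded :=
    { (bc_isInternal Y).chooseDecomposition with
      one_mem := bc_one_mem Y
      mul_mem := fun {i j a b} ha hb => by
        haveI := Y.graded
        exact baseChange_mul Y (Y.grading i) (Y.grading j) (Y.grading (i + j))
          (fun a ha b hb => SetLike.mul_mem_graded ha hb) ha hb }
  action := bcActionHom Y
  degPres := fun g d a ha => bc_degPres Y g d ha

end BaseChange
section Invariants

open TensorProduct

variable {F k G : Type} [Field F] [Field k] [Algebra F k] [Group G]
variable (Y : GradedAlgebraWithAction F G)

lemma bcPhi_naturality (g : G) (x : k ⊗[F] Y.carrier) :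
    bcPhi Y (bcActionHom Y g x) =
      Finsupp.mapRange (Y.action g) (map_zero _) (bcPhi Y x) := by
  induction x using TensorProduct.induction_on with
  | zero => simp
  | tmul c m =>
    have : bcActionHom Y g (c ⊗ₜ[F] m) = c ⊗ₜ[F] (Y.action g m) := by
      show Algebra.TensorProduct.congr (AlgEquiv.refl (R := k) (A₁ := k)) (Y.action g)
        (c ⊗ₜ[F] m) = _
      rw [Algebra.TensorProduct.congr_apply, Algebra.TensorProduct.map_tmul]
      rfl
    rw [this]
    ext i
    rw [bcPhi_tmul, Finsupp.mapRange_apply, bcPhi_tmul]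
    exact (map_smul ((Y.action g).toLinearMap) _ m).symm
  | add a b ha hb =>
    rw [map_add, map_add, ha, hb, map_add, Finsupp.mapRange_add (map_add _)]

lemma bc_invariant_mem (d : ℕ) {x : k ⊗[F] Y.carrier}
    (hx : x ∈ (Y.grading d).baseChange k)
    (hinv : ∀ g : G, bcActionHom Y g x = x) :
    x ∈ Submodule.span k ((TensorProduct.mk F k Y.carrier 1) ''
      {a : Y.carrier | a ∈ Y.inv ∧ a ∈ (Y.grading d : Set Y.carrier)}) := by
  classical
  set f := bcPhi Y x with hf
  have hcoord : ∀ i, f i ∈ Y.grading d := fun i => by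
    simpa using bcPhi_coord_mem Y (Y.grading d) hx 1 i
  have hinvf : ∀ i, f i ∈ Y.inv := by
    intro i g
    have h1 := bcPhi_naturality Y g x
    rw [hinv g] at h1
    have h2 : f i = Finsupp.mapRange (Y.action g) (map_zero _) f i := by
      conv_lhs => rw [hf, h1]
    rw [Finsupp.mapRange_apply] at h2
    exact h2.symm
  have hx2 : x = f.support.sum
      (fun i => ((Module.Basis.ofVectorSpace F k) i : k) ⊗ₜ[F] f i) := by
    apply (bcPhi Y).injective
    rw [map_sum]
    ext j
    rw [Finsupp.finset_sum_apply]
    have : ∀ i ∈ f.support,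
        bcPhi Y (((Module.Basis.ofVectorSpace F k) i : k) ⊗ₜ[F] f i) j
          = if i = j then f j else 0 := by
      intro i _
      rw [bcPhi_tmul, Module.Basis.repr_self, Finsupp.single_apply]
      split_ifs with hij
      · subst hij; rw [one_smul]
      · rw [zero_smul]
    rw [Finset.sum_congr rfl this]
    rw [Finset.sum_ite_eq' f.support j (fun _ => f j)]
    split_ifs with hj
    · rfl
    · exact Finsupp.notMem_support_iff.1 hj
  rw [hx2]
  refine Submodule.sum_mem _ fun i _ => ?_
  have : ((Module.Basis.ofVectorSpace F k) i : k) ⊗ₜ[F] f i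
      = ((Module.Basis.ofVectorSpace F k) i : k) • ((1:k) ⊗ₜ[F] f i) := by
    rw [smul_tmul', smul_eq_mul, mul_one]
  rw [this]
  exact Submodule.smul_mem _ _
    (Submodule.subset_span ⟨f i, ⟨hinvf i, hcoord i⟩, rfl⟩)

lemma bc_betaTop_le (h : Y.betaTop ≤ 1) : (Y.baseChangeGAWA (k := k)).betaTop ≤ 1 := by
  haveI := Y.graded
  have h1 : (1 : ℕ∞) = ((1 : ℕ) : ℕ∞) := by norm_cast
  rw [GradedAlgebraWithAction.betaTop, h1, beta_le_iff]
  rw [GradedAlgebraWithAction.betaTop, h1, beta_le_iff] at h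
  rintro x -
  show x ∈ Subring.closure _
  induction x using TensorProduct.induction_on with
  | zero => exact zero_mem _
  | tmul c m =>
    have hsplit : c ⊗ₜ[F] m = (c ⊗ₜ[F] (1 : Y.carrier)) * ((1:k) ⊗ₜ[F] m) := by
      rw [Algebra.TensorProduct.tmul_mul_tmul, mul_one, one_mul]
    rw [hsplit]
    refine mul_mem (Subring.subset_closure ⟨trivial, 0, by omega, ?_⟩) ?_
    · exact Submodule.tmul_mem_baseChange_of_mem c (SetLike.one_mem_graded Y.grading)
    · -- 1 ⊗ m with m in the closure generated in degrees ≤ 1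
      have hm : m ∈ Subring.closure
          {a : Y.carrier | a ∈ (⊤ : Subring Y.carrier) ∧ ∃ d ≤ 1, a ∈ (Y.grading d : Set _)} :=
        h trivial
      set ir := (Algebra.TensorProduct.includeRight
          (R := F) (A := k) (B := Y.carrier)).toRingHom with hir
      have h2 : ir m ∈ (Subring.closure
          {a : Y.carrier | a ∈ (⊤ : Subring Y.carrier) ∧ ∃ d ≤ 1,
            a ∈ (Y.grading d : Set _)}).map ir := ⟨m, hm, rfl⟩
      rw [RingHom.map_closure] at h2
      have h3 : ir '' {a : Y.carrier | a ∈ (⊤ : Subring Y.carrier) ∧ ∃ d ≤ 1,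
            a ∈ (Y.grading d : Set _)} ⊆
          {a : k ⊗[F] Y.carrier | a ∈ (⊤ : Subring (k ⊗[F] Y.carrier)) ∧ ∃ d ≤ 1,
            a ∈ ((Y.grading d).baseChange k : Set (k ⊗[F] Y.carrier))} := by
        rintro _ ⟨a, ⟨-, d, hd, had⟩, rfl⟩
        exact ⟨trivial, d, hd, Submodule.tmul_mem_baseChange_of_mem 1 had⟩
      exact Subring.closure_mono h3 h2
  | add a b ha hb => exact add_mem ha hb

end Invariants
section Main

open TensorProduct

variable {F k G : Type} [Field F] [Field k] [Algebra F k] [Group G]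
variable (Y : GradedAlgebraWithAction F G)

lemma bc_betaInv_ge : Y.betaInv ≤ (Y.baseChangeGAWA (k := k)).betaInv := by
  haveI := Y.graded
  refine beta_le_of_subset fun n hn => ?_
  intro b hb
  -- the subring of invariants generated in degrees ≤ n, as an F-submodule
  set S : Set Y.carrier :=
    {a : Y.carrier | a ∈ Y.inv ∧ ∃ d ≤ n, a ∈ (Y.grading d : Set Y.carrier)} with hS
  have hsmul : ∀ (c : F) (x : Y.carrier), x ∈ Subring.closure S → c • x ∈ Subring.closure S := by
    intro c x hx
    induction hx using Subring.closure_induction with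
    | mem a ha =>
      refine Subring.subset_closure ?_
      obtain ⟨hainv, d, hd, had⟩ := ha
      refine ⟨fun g => ?_, d, hd, (Y.grading d).smul_mem c had⟩
      rw [show (Y.action g) (c • a) = c • (Y.action g) a
        from map_smul (Y.action g).toLinearMap c a, hainv g]
    | zero => rw [smul_zero]; exact zero_mem _
    | one =>
      refine Subring.subset_closure ⟨fun g => ?_, 0, Nat.zero_le n, (Y.grading 0).smul_mem c (SetLike.one_mem_graded Y.grading)⟩
      rw [show (Y.action g) (c • (1:Y.carrier)) = c • (Y.action g) (1:Y.carrier)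
        from map_smul (Y.action g).toLinearMap c 1, map_one]
    | add x y hx hy ihx ihy => rw [smul_add]; exact add_mem ihx ihy
    | neg x hx ihx => rw [smul_neg]; exact neg_mem ihx
    | mul x y hx hy ihx ihy => rw [← smul_mul_assoc]; exact mul_mem ihx hy
  set W : Submodule F Y.carrier :=
    { carrier := (Subring.closure S : Set Y.carrier)
      add_mem' := fun ha hb => add_mem ha hb
      zero_mem' := zero_mem _
      smul_mem' := fun c x hx => hsmul c x hx } with hW
  -- invariance of 1 ⊗ b
  have h1b : ∀ g : G, bcActionHom Y g ((1:k) ⊗ₜ[F] b) = (1:k) ⊗ₜ[F] b := by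
    intro g
    show Algebra.TensorProduct.congr (AlgEquiv.refl (R := k) (A₁ := k)) (Y.action g)
      ((1:k) ⊗ₜ[F] b) = _
    rw [Algebra.TensorProduct.congr_apply, Algebra.TensorProduct.map_tmul]
    show (1:k) ⊗ₜ[F] (Y.action g b) = _
    rw [hb g]
  have h2 : (1:k) ⊗ₜ[F] b ∈ Subring.closure
      {a | a ∈ (Y.baseChangeGAWA (k := k)).inv ∧
        ∃ d ≤ n, a ∈ ((Y.baseChangeGAWA (k := k)).grading d : Set _)} :=
    hn (fun g => h1b g)
  -- the subring structure on the base change of W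
  have hWmul : ∀ a ∈ W, ∀ b ∈ W, a * b ∈ W := fun a ha b hb =>
    show a * b ∈ Subring.closure S from
      mul_mem (show a ∈ Subring.closure S from ha) (show b ∈ Subring.closure S from hb)
  set R' : Subring (k ⊗[F] Y.carrier) :=
    { carrier := (W.baseChange k : Set (k ⊗[F] Y.carrier))
      mul_mem' := fun hx hy => baseChange_mul Y W W W hWmul hx hy
      one_mem' := by
        rw [Algebra.TensorProduct.one_def]
        exact Submodule.tmul_mem_baseChange_of_mem 1
          (show (1 : Y.carrier) ∈ Subring.closure S from one_mem _)
      add_mem' := fun hx hy => add_mem hx hy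
      zero_mem' := zero_mem _
      neg_mem' := fun hx => neg_mem hx } with hR'
  have h3 : (1:k) ⊗ₜ[F] b ∈ R' := by
    refine Subring.closure_le.mpr ?_ h2
    rintro x ⟨hxinv, d, hd, hxd⟩
    have hmem := bc_invariant_mem Y d hxd (fun g => hxinv g)
    refine Submodule.span_le.mpr ?_ hmem
    rintro _ ⟨a, ⟨hainv, had⟩, rfl⟩
    show (TensorProduct.mk F k Y.carrier 1) a ∈ W.baseChange k
    exact Submodule.tmul_mem_baseChange_of_mem 1
      (Subring.subset_closure ⟨hainv, d, hd, had⟩)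
  exact mem_of_tmul_one_mem Y W h3

lemma betaRing_ge_of_algebra : betaRing F G ≤ betaRing k G := by
  refine iSup₂_le fun Y hY => ?_
  refine le_trans (bc_betaInv_ge (k := k) Y) ?_
  exact le_iSup₂ (f := fun (X : GradedAlgebraWithAction k G) (_ : X.betaTop ≤ 1) => X.betaInv)
    (Y.baseChangeGAWA (k := k)) (bc_betaTop_le Y hY)

lemma betaRing_eq_of_algebra : betaRing k G = betaRing F G :=
  le_antisymm (betaRing_le_of_ringHom (algebraMap F k)) (betaRing_ge_of_algebra)

end Main
/-- For a finite group `G`, the invariant `β_k(G)` for fields `k`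
depends only on the characteristic of `k`: if `k` and `K` are fields of the same
characteristic then `β_k(G) = β_K(G)`. -/
theorem betaRing_eq_of_ringChar_eq (k K G : Type) [Field k] [Field K] [Group G]
    [Finite G] (hchar : ringChar k = ringChar K) :
    betaRing k G = betaRing K G := by
  rcases CharP.char_is_prime_or_zero k (ringChar k) with hp | h0
  · haveI : Fact (ringChar k).Prime := ⟨hp⟩
    haveI c1 : CharP k (ringChar k) := ringChar.charP k
    haveI c2 : CharP K (ringChar k) := hchar ▸ ringChar.charP K
    letI : Algebra (ZMod (ringChar k)) k := (ZMod.castHom dvd_rfl k).toAlgebra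
    letI : Algebra (ZMod (ringChar k)) K := (ZMod.castHom dvd_rfl K).toAlgebra
    rw [betaRing_eq_of_algebra (F := ZMod (ringChar k)) (k := k),
      betaRing_eq_of_algebra (F := ZMod (ringChar k)) (k := K)]
  · haveI : CharP k 0 := h0 ▸ ringChar.charP k
    haveI : CharZero k := CharP.charP_to_charZero k
    have h0' : ringChar K = 0 := by rw [← hchar, h0]
    haveI : CharP K 0 := h0' ▸ ringChar.charP K
    haveI : CharZero K := CharP.charP_to_charZero K
    rw [betaRing_eq_of_algebra (F := ℚ) (k := k), betaRing_eq_of_algebra (F := ℚ) (k := K)]
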